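/- For h(s,x) = s²/(s²+c²)·(s²+c²−x²) with c > 0, the derivative in x of the ratio h_x/h_s equals −s(s²+c²)·(c⁴ + c²(x²+2s²) + s⁴)/(c⁴ − c²(x²−2s²) + s⁴)², and in particular is strictly negative for all (s,x) with s > 0 and x² < s²+c². -/

import Mathlib

noncomputable def hEll (c s x : ℝ) : ℝ := s^2 / (s^2 + c^2) * (s^2 + c^2 - x^2)

lemma derivX (c s : ℝ) (t : ℝ) :
    deriv (fun t' => hEll c s t') t = -2 * s^2 / (s^2 + c^2) * t := by
  have h : HasDerivAt (fun t' : ℝ => s^2 / (s^2 + c^2) * (s^2 + c^2 - t'^2))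
      (-2 * s^2 / (s^2 + c^2) * t) t := by
    have := ((hasDerivAt_pow 2 t).const_sub (s^2 + c^2)).const_mul (s^2 / (s^2 + c^2))
    refine this.congr_deriv ?_
    ring
  exact h.deriv

lemma derivS (c s t : ℝ) (hc : 0 < c) (hs : 0 < s) :
    deriv (fun u => hEll c u t) s
      = 2 * s / (s^2 + c^2)^2 * ((s^2 + c^2)^2 - c^2 * t^2) := by
  have hA : (s^2 + c^2) ≠ 0 := by positivity
  have p : HasDerivAt (fun u : ℝ => u^2) (2 * s) s := by
    simpa using hasDerivAt_pow 2 s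
  have q : HasDerivAt (fun u : ℝ => u^2 + c^2) (2 * s) s := p.add_const _
  have r : HasDerivAt (fun u : ℝ => u^2 / (u^2 + c^2))
      ((2*s*(s^2+c^2) - s^2*(2*s)) / (s^2+c^2)^2) s := p.div q hA
  have m : HasDerivAt (fun u : ℝ => u^2 + c^2 - t^2) (2 * s) s := q.sub_const _
  have h := r.mul m
  have h2 : deriv (fun u => hEll c u t) s
      = ((2*s*(s^2+c^2) - s^2*(2*s)) / (s^2+c^2)^2) * (s^2 + c^2 - t^2)
        + (s^2 / (s^2+c^2)) * (2*s) := h.deriv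
  rw [h2]
  field_simp
  ring

/-- the `x`-derivative of `h_x/h_s` equals
`−s(s²+c²)(c⁴+c²(x²+2s²)+s⁴)/(c⁴−c²(x²−2s²)+s⁴)²`, and is strictly negative. -/
theorem stmt2 (c : ℝ) (hc : 0 < c) (s x : ℝ) (hs : 0 < s) (hx : x^2 < s^2 + c^2) :
    deriv (fun t => deriv (fun t' => hEll c s t') t / deriv (fun u => hEll c u t) s) x
      = -(s * (s^2 + c^2)) * (c^4 + c^2 * (x^2 + 2*s^2) + s^4)
          / (c^4 - c^2 * (x^2 - 2*s^2) + s^4)^2 ∧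
    deriv (fun t => deriv (fun t' => hEll c s t') t / deriv (fun u => hEll c u t) s) x < 0 := by
  have hA : (0:ℝ) < s^2 + c^2 := by positivity
  have hA' : (s^2 + c^2) ≠ 0 := ne_of_gt hA
  have hD : (0:ℝ) < (s^2 + c^2)^2 - c^2 * x^2 := by nlinarith
  have hfun : (fun t => deriv (fun t' => hEll c s t') t / deriv (fun u => hEll c u t) s)
      = fun t => (-2 * s^2 / (s^2 + c^2) * t) / (2 * s / (s^2 + c^2)^2 * ((s^2 + c^2)^2 - c^2 * t^2)) := by
    funext t
    rw [derivX c s t, derivS c s t hc hs]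
  have hn : HasDerivAt (fun t : ℝ => -2 * s^2 / (s^2 + c^2) * t)
      (-2 * s^2 / (s^2 + c^2)) x := by
    have := (hasDerivAt_id x).const_mul (-2 * s^2 / (s^2 + c^2))
    simpa [mul_comm] using this
  have hd : HasDerivAt (fun t : ℝ => 2 * s / (s^2 + c^2)^2 * ((s^2 + c^2)^2 - c^2 * t^2))
      (2 * s / (s^2 + c^2)^2 * (-(c^2 * (2 * x)))) x := by
    have := (((hasDerivAt_pow 2 x).const_mul (c^2)).const_sub ((s^2+c^2)^2)).const_mul
      (2 * s / (s^2 + c^2)^2)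
    refine this.congr_deriv ?_
    ring
  have hdx : (2 * s / (s^2 + c^2)^2 * ((s^2 + c^2)^2 - c^2 * x^2)) ≠ 0 := by positivity
  have hdiv := hn.div hd hdx
  have hval : deriv (fun t => deriv (fun t' => hEll c s t') t / deriv (fun u => hEll c u t) s) x
      = (-2 * s^2 / (s^2 + c^2) * (2 * s / (s^2 + c^2)^2 * ((s^2 + c^2)^2 - c^2 * x^2))
        - (-2 * s^2 / (s^2 + c^2) * x) * (2 * s / (s^2 + c^2)^2 * (-(c^2 * (2 * x)))))
        / (2 * s / (s^2 + c^2)^2 * ((s^2 + c^2)^2 - c^2 * x^2))^2 := by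
    rw [hfun]; exact hdiv.deriv
  have hD' : (c^4 - c^2 * (x^2 - 2*s^2) + s^4) ≠ 0 := by nlinarith
  have heq : deriv (fun t => deriv (fun t' => hEll c s t') t / deriv (fun u => hEll c u t) s) x
      = -(s * (s^2 + c^2)) * (c^4 + c^2 * (x^2 + 2*s^2) + s^4)
          / (c^4 - c^2 * (x^2 - 2*s^2) + s^4)^2 := by
    rw [hval]
    rw [div_eq_div_iff (by positivity) (by positivity)]
    field_simp
    ring
  refine ⟨heq, ?_⟩
  rw [heq]
  have hP : (0:ℝ) < c^4 + c^2 * (x^2 + 2*s^2) + s^4 := by positivity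
  apply div_neg_of_neg_of_pos
  · nlinarith [mul_pos (mul_pos hs hA) hP]
  · positivity
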